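/- Let T ⊂ k[z_1,...,z_n] be a zero-dimensional triangular set, k a perfect field (or characteristic 0). Then ⟨T⟩ is radical if and only if for every i, gcd(t_i, ∂t_i/∂z_i) = 1 modulo ⟨T_{i-1}⟩, i.e., t_i and its derivative with respect to z_i generate the unit ideal modulo ⟨t_1,...,t_{i-1}⟩. -/

import Mathlib

set_option maxHeartbeats 1000000
set_option synthInstance.maxHeartbeats 400000


open MvPolynomial

/-- `f` is monic of positive degree in the variable `i`. -/
def MonicInVar {k : Type*} [CommRing k] {n : ℕ} (f : MvPolynomial (Fin n) k) (i : Fin n) : Prop :=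
  ∃ (d : ℕ) (r : MvPolynomial (Fin n) k), 0 < d ∧ degreeOf i r < d ∧ f = X i ^ d + r

/-- `t` is a (zero-dimensional) triangular set. -/
def IsTriangularSet {k : Type*} [CommRing k] {n : ℕ}
    (t : Fin n → MvPolynomial (Fin n) k) : Prop :=
  ∀ i, MonicInVar (t i) i ∧ (∀ j, i < j → degreeOf j (t i) = 0) ∧
    ∀ j, j < i → degreeOf j (t i) < degreeOf j (t j)

namespace TriangularRadical

open Polynomial

/-! ### Generic ring-theoretic helpers -/

lemma eq_zero_of_mem_all_maximal {B : Type*} [CommRing B] [IsArtinianRing B] [IsReduced B] {x : B}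
    (h : ∀ m : Ideal B, m.IsMaximal → x ∈ m) : x = 0 := by
  have : IsNilpotent x := nilpotent_iff_mem_prime.mpr fun J hJ =>
    h J ((IsArtinianRing.isPrime_iff_isMaximal J).mp hJ)
  exact this.eq_zero

lemma exists_idem {B : Type*} [CommRing B] [IsArtinianRing B] [IsReduced B]
    (m0 : Ideal B) (hm0 : m0.IsMaximal) :
    ∃ e : B, Ideal.Quotient.mk m0 e = 1 ∧ ∀ x ∈ m0, e * x = 0 := by
  classical
  haveI := hm0
  have key : ∀ m' : Ideal B, m'.IsMaximal → m' ≠ m0 → ∃ a, a ∈ m' ∧ a ∉ m0 := by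
    intro m' hm' hne
    by_contra hc
    push_neg at hc
    exact hne (hm'.eq_of_le hm0.ne_top fun a ha => hc a ha)
  let g : Ideal B → B := fun m' =>
    if h : m'.IsMaximal ∧ m' ≠ m0 then (key m' h.1 h.2).choose else 0
  have hg1 : ∀ m', m'.IsMaximal → m' ≠ m0 → g m' ∈ m' := by
    intro m' h1 h2; simp only [g, dif_pos (And.intro h1 h2)]
    exact (key m' h1 h2).choose_spec.1
  have hg2 : ∀ m', m'.IsMaximal → m' ≠ m0 → g m' ∉ m0 := by
    intro m' h1 h2; simp only [g, dif_pos (And.intro h1 h2)]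
    exact (key m' h1 h2).choose_spec.2
  let T : Finset (Ideal B) :=
    ((IsArtinianRing.setOfPred_isMaximal_finite B).toFinset).erase m0
  have hTmem : ∀ m' ∈ T, m'.IsMaximal ∧ m' ≠ m0 := by
    intro m' hm'
    obtain ⟨h1, h2⟩ := Finset.mem_erase.mp hm'
    exact ⟨by simpa using h2, h1⟩
  set P : B := ∏ m' ∈ T, g m' with hP
  have hPmem : ∀ m' : Ideal B, m'.IsMaximal → m' ≠ m0 → P ∈ m' := by
    intro m' h1 h2
    have hmT : m' ∈ T := Finset.mem_erase.mpr ⟨h2, by simpa using h1⟩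
    obtain ⟨c, hc⟩ := Finset.dvd_prod_of_mem g hmT
    rw [hP, hc]
    exact Ideal.mul_mem_right _ _ (hg1 m' h1 h2)
  have hPnot : P ∉ m0 := by
    intro hPm
    obtain ⟨m', hm'T, hm'mem⟩ := (Ideal.IsPrime.prod_mem_iff).mp hPm
    obtain ⟨h1, h2⟩ := hTmem m' hm'T
    exact hg2 m' h1 h2 hm'mem
  letI : Field (B ⧸ m0) := Ideal.Quotient.field m0
  have hPne : Ideal.Quotient.mk m0 P ≠ 0 := by
    simpa [Ideal.Quotient.eq_zero_iff_mem] using hPnot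
  obtain ⟨b, hb⟩ := Ideal.Quotient.mk_surjective (I := m0) (Ideal.Quotient.mk m0 P)⁻¹
  refine ⟨b * P, ?_, ?_⟩
  · rw [map_mul, hb, inv_mul_cancel₀ hPne]
  · intro x hx
    apply eq_zero_of_mem_all_maximal
    intro m' hm'
    by_cases h : m' = m0
    · subst h; exact Ideal.mul_mem_left _ _ hx
    · exact Ideal.mul_mem_right _ _ (Ideal.mul_mem_left _ _ (hPmem m' hm' h))

/-- The key univariate step: for a finite algebra `B` over a perfect field,
`B[X]/(f)` is reduced iff `B` is reduced and `f` is coprime to its derivative. -/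
theorem keyStep {B : Type*} [CommRing B] {k : Type*} [Field k] [PerfectField k] [Algebra k B]
    [Module.Finite k B] {f : B[X]} (hf : f.Monic) (hd : 0 < f.natDegree) :
    IsReduced (B[X] ⧸ Ideal.span {f}) ↔ IsReduced B ∧ IsCoprime f (derivative f) := by
  haveI : IsArtinianRing B := IsArtinianRing.of_finite k B
  constructor
  · intro hred
    have hBred : IsReduced B := by
      refine isReduced_of_injective
        ((Ideal.Quotient.mk (Ideal.span {f})).comp Polynomial.C) ?_
      rw [injective_iff_map_eq_zero]
      intro a ha
      by_contra ha0
      have hmem : (Polynomial.C a : B[X]) ∈ Ideal.span {f} := by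
        rwa [RingHom.comp_apply, Ideal.Quotient.eq_zero_iff_mem] at ha
      obtain ⟨c, hc⟩ := Ideal.mem_span_singleton.mp hmem
      have hc0 : c ≠ 0 := by rintro rfl; rw [mul_zero] at hc; exact ha0 (by simpa using hc)
      have hdeg : (f * c).natDegree = f.natDegree + c.natDegree :=
        Polynomial.natDegree_mul' (by
          rw [hf.leadingCoeff, one_mul]; exact leadingCoeff_ne_zero.mpr hc0)
      rw [← hc, natDegree_C] at hdeg
      omega
    haveI := hBred
    have hsf : ∀ m : Ideal B, m.IsMaximal →
        Squarefree (f.map (Ideal.Quotient.mk m)) := by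
      intro m hm
      haveI := hm
      letI : Field (B ⧸ m) := Ideal.Quotient.field m
      by_contra hns
      rw [Squarefree] at hns; push_neg at hns
      obtain ⟨pp, hppdvd, hppu⟩ := hns
      set g : (B ⧸ m)[X] := f.map (Ideal.Quotient.mk m) with hg
      have hgmonic : g.Monic := hf.map _
      have hgne : g ≠ 0 := hgmonic.ne_zero
      obtain ⟨c, hc⟩ := hppdvd
      have hpp0 : pp ≠ 0 := by rintro rfl; rw [mul_zero, zero_mul] at hc; exact hgne hc
      have hc0 : c ≠ 0 := by rintro rfl; rw [mul_zero] at hc; exact hgne hc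
      have hq2 : (pp * c) * (pp * c) = g * c := by rw [hc]; ring
      have hqnot : pp * c ∉ Ideal.span {g} := by
        rw [Ideal.mem_span_singleton]
        rintro ⟨d, hd⟩
        apply hppu
        have heq : pp * (c * 1) = pp * (c * (pp * d)) := by
          rw [mul_one, hd, hc]; ring
        have h2 := mul_left_cancel₀ hc0 (mul_left_cancel₀ hpp0 heq)
        exact IsUnit.of_mul_eq_one _ h2.symm
      obtain ⟨Q, hQ⟩ := Polynomial.map_surjective _ Ideal.Quotient.mk_surjective (pp * c)
      obtain ⟨Cc, hCc⟩ := Polynomial.map_surjective _ Ideal.Quotient.mk_surjective c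
      have hker : Q * Q - Cc * f ∈ RingHom.ker (Polynomial.mapRingHom (Ideal.Quotient.mk m)) := by
        rw [RingHom.mem_ker, map_sub, map_mul, map_mul]
        simp only [Polynomial.coe_mapRingHom, hQ, hCc, ← hg, hq2]
        ring
      rw [Polynomial.ker_mapRingHom, Ideal.mk_ker] at hker
      obtain ⟨e, he1, he0⟩ := exists_idem m hm
      have hCe : ∀ w ∈ Ideal.map Polynomial.C m, (Polynomial.C e : B[X]) * w = 0 := by
        intro w hw
        rw [← Ideal.span_eq m, Ideal.map_span] at hw
        refine Submodule.span_induction ?_ ?_ ?_ ?_ hw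
        · rintro w ⟨x, hx, rfl⟩
          rw [← map_mul, he0 x hx, map_zero]
        · rw [mul_zero]
        · intro a b _ _ ha hb; rw [mul_add, ha, hb, add_zero]
        · intro r a _ ha
          rw [smul_eq_mul, ← mul_assoc, mul_comm (Polynomial.C e) r, mul_assoc, ha, mul_zero]
      have hx2 : (Polynomial.C e * Q) * (Polynomial.C e * Q) ∈ Ideal.span {f} := by
        have hsplit : (Polynomial.C e * Q) * (Polynomial.C e * Q)
            = Polynomial.C e * Polynomial.C e * Cc * f + Polynomial.C e * (Polynomial.C e * (Q * Q - Cc * f)) := by ring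
        rw [hsplit, hCe _ hker, mul_zero, add_zero, Ideal.mem_span_singleton]
        exact ⟨Polynomial.C e * Polynomial.C e * Cc, by ring⟩
      have hxne : (Polynomial.C e * Q : B[X]) ∉ Ideal.span {f} := by
        intro hmem
        apply hqnot
        have : (Polynomial.C e * Q).map (Ideal.Quotient.mk m) ∈ Ideal.span {g} := by
          have := Ideal.mem_map_of_mem (Polynomial.mapRingHom (Ideal.Quotient.mk m)) hmem
          rwa [Ideal.map_span, Set.image_singleton] at this
        simpa [Polynomial.map_mul, hQ, he1] using this
      have hnil : IsNilpotent (Ideal.Quotient.mk (Ideal.span {f}) (Polynomial.C e * Q)) :=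
        ⟨2, by rw [pow_two, ← map_mul]; exact (Ideal.Quotient.eq_zero_iff_mem).mpr hx2⟩
      exact hxne ((Ideal.Quotient.eq_zero_iff_mem).mp hnil.eq_zero)
    refine ⟨hBred, ?_⟩
    by_contra hnc
    have hne : Ideal.span {f, derivative f} ≠ ⊤ := by
      intro htop
      have h1 : (1 : B[X]) ∈ Ideal.span {f, derivative f} := htop ▸ Submodule.mem_top
      obtain ⟨u, v, huv⟩ := Ideal.mem_span_pair.mp h1
      exact hnc ⟨u, v, huv⟩
    obtain ⟨M, hM, hMle⟩ := Ideal.exists_le_maximal _ hne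
    have hfM : f ∈ M := hMle (Ideal.subset_span (by simp))
    have hf'M : derivative f ∈ M := hMle (Ideal.subset_span (by simp))
    haveI : M.IsPrime := hM.isPrime
    set p := M.comap (Polynomial.C : B →+* B[X]) with hpdef
    haveI hpp : p.IsPrime := Ideal.IsPrime.comap _
    have hpmax : p.IsMaximal := (IsArtinianRing.isPrime_iff_isMaximal p).mp hpp
    haveI := hpmax
    letI : Field (B ⧸ p) := Ideal.Quotient.field p
    haveI : Module.Finite k (B ⧸ p) :=
      Module.Finite.of_surjective (Ideal.Quotient.mkₐ k p).toLinearMap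
        Ideal.Quotient.mk_surjective
    haveI : Algebra.IsAlgebraic k (B ⧸ p) := Algebra.IsAlgebraic.of_finite k _
    haveI : PerfectField (B ⧸ p) := Algebra.IsAlgebraic.perfectField (K := k)
    have hsep : (f.map (Ideal.Quotient.mk p)).Separable :=
      PerfectField.separable_iff_squarefree.mpr (hsf p hpmax)
    obtain ⟨u, v, huv⟩ := hsep
    obtain ⟨U, hU⟩ := Polynomial.map_surjective _ Ideal.Quotient.mk_surjective u
    obtain ⟨V, hV⟩ := Polynomial.map_surjective _ Ideal.Quotient.mk_surjective v
    have hker : U * f + V * derivative f - 1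
        ∈ RingHom.ker (Polynomial.mapRingHom (Ideal.Quotient.mk p)) := by
      rw [RingHom.mem_ker, map_sub, map_add, map_mul, map_mul, map_one]
      simp only [Polynomial.coe_mapRingHom, hU, hV]
      rw [← Polynomial.derivative_map, huv, sub_self]
    rw [Polynomial.ker_mapRingHom, Ideal.mk_ker] at hker
    have hmem : U * f + V * derivative f - 1 ∈ M :=
      Ideal.map_comap_le hker
    have h1M : (1 : B[X]) ∈ M := by
      have := M.sub_mem (M.add_mem (M.mul_mem_left U hfM) (M.mul_mem_left V hf'M)) hmem
      simpa using this
    exact hM.ne_top ((Ideal.eq_top_iff_one M).mpr h1M)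
  · rintro ⟨hBred, hco⟩
    haveI := hBred
    rw [← Ideal.isRadical_iff_quotient_reduced, ← isRadical_iff_span_singleton]
    intro nn y hdvd
    rw [← Polynomial.modByMonic_eq_zero_iff_dvd hf]
    set r := y %ₘ f with hr
    have hrm : ∀ m : Ideal B, m.IsMaximal → r.map (Ideal.Quotient.mk m) = 0 := by
      intro m hm
      haveI := hm
      letI : Field (B ⧸ m) := Ideal.Quotient.field m
      set g : (B ⧸ m)[X] := f.map (Ideal.Quotient.mk m) with hg
      have hgsep : g.Separable := by
        have h := hco.map (Polynomial.mapRingHom (Ideal.Quotient.mk m))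
        simp only [Polynomial.coe_mapRingHom] at h
        rw [Polynomial.Separable, hg, Polynomial.derivative_map]
        exact h
      have hgrad : IsRadical g := hgsep.squarefree.isRadical
      have hgdvd : g ∣ y.map (Ideal.Quotient.mk m) := by
        refine hgrad nn _ ?_
        rw [← Polynomial.map_pow]
        exact Polynomial.map_dvd _ hdvd
      rw [hr, Polynomial.map_modByMonic _ hf]
      exact (Polynomial.modByMonic_eq_zero_iff_dvd (hf.map _)).mpr hgdvd
    ext i
    rw [Polynomial.coeff_zero]
    apply eq_zero_of_mem_all_maximal
    intro m hm
    have := hrm m hm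
    rw [← Ideal.Quotient.eq_zero_iff_mem]
    calc Ideal.Quotient.mk m (r.coeff i) = (r.map (Ideal.Quotient.mk m)).coeff i := by
          rw [Polynomial.coeff_map]
      _ = 0 := by rw [this, Polynomial.coeff_zero]

/-! ### `finSuccEquiv` helpers -/

section FSE

variable {k : Type*} [CommRing k] {n : ℕ}

lemma fse_rename_succ (q : MvPolynomial (Fin n) k) :
    finSuccEquiv k n (rename Fin.succ q) = Polynomial.C q := by
  induction q using MvPolynomial.induction_on with
  | C a => simp [finSuccEquiv_apply]
  | add p q hp hq => rw [map_add, map_add, hp, hq, map_add]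
  | mul_X p i hp => rw [map_mul, map_mul, hp, rename_X, finSuccEquiv_X_succ, ← Polynomial.C_mul]

lemma fse_pderiv (p : MvPolynomial (Fin (n+1)) k) :
    Polynomial.derivative (finSuccEquiv k n p) = finSuccEquiv k n (pderiv 0 p) := by
  induction p using MvPolynomial.induction_on with
  | C a =>
      rw [MvPolynomial.pderiv_C, map_zero,
        show (finSuccEquiv k n) (MvPolynomial.C a) = Polynomial.C (MvPolynomial.C a) from by
          simp [finSuccEquiv_apply], derivative_C]
  | add p q hp hq => simp only [map_add, hp, hq]
  | mul_X p i hp =>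
      rcases Fin.eq_zero_or_eq_succ i with rfl | ⟨j, rfl⟩
      · rw [map_mul, finSuccEquiv_X_zero, derivative_mul, derivative_X, mul_one, hp,
          pderiv_mul, pderiv_X_self, mul_one, map_add, map_mul, finSuccEquiv_X_zero]
      · rw [map_mul, finSuccEquiv_X_succ, derivative_mul, derivative_C, mul_zero, add_zero, hp,
          pderiv_mul, pderiv_X_of_ne (Fin.succ_ne_zero j), mul_zero, add_zero,
          map_mul, finSuccEquiv_X_succ]

lemma exists_rename_of_degreeOf_zero {p : MvPolynomial (Fin (n+1)) k}
    (h : degreeOf 0 p = 0) : ∃ q, p = rename Fin.succ q := by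
  have h1 : (finSuccEquiv k n p).natDegree = 0 := by rw [natDegree_finSuccEquiv, h]
  obtain ⟨q, hq⟩ := Polynomial.natDegree_eq_zero.mp h1
  refine ⟨q, (finSuccEquiv k n).injective ?_⟩
  rw [fse_rename_succ, hq]

end FSE

/-! ### span/radical transfer helpers -/

lemma mem_span_image_of_mem {R S F : Type*} [CommRing R] [CommRing S] [FunLike F R S]
    [RingHomClass F R S] (φ : F) {x : R}
    {T : Set R} (hx : x ∈ Ideal.span T) {T' : Set S} (hT : ⇑φ '' T ⊆ T') :
    φ x ∈ Ideal.span T' := by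
  have h := Ideal.mem_map_of_mem φ hx
  rw [Ideal.map_span] at h
  exact Ideal.span_mono hT h

lemma isReduced_congr {R S : Type*} [CommRing R] [CommRing S] (e : R ≃+* S) :
    IsReduced R ↔ IsReduced S :=
  ⟨fun _ => isReduced_of_injective (e.symm : S →+* R) e.symm.injective,
   fun _ => isReduced_of_injective (e : R →+* S) e.injective⟩

lemma isRadical_map_equiv_iff {R S : Type*} [CommRing R] [CommRing S] (e : R ≃+* S)
    (I : Ideal R) : (I.map (e : R →+* S)).IsRadical ↔ I.IsRadical := by
  rw [Ideal.isRadical_iff_quotient_reduced, Ideal.isRadical_iff_quotient_reduced]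
  exact (isReduced_congr (Ideal.quotientEquiv I (I.map (e : R →+* S)) e rfl)).symm

lemma cond_transfer {P P' : Type*} [CommRing P] [CommRing P'] (e : P ≃+* P')
    (x y : P) (T : Set P) :
    (∃ A B, A * x + B * y - 1 ∈ Ideal.span T) ↔
      (∃ A B, A * e x + B * e y - 1 ∈ Ideal.span (⇑e '' T)) := by
  constructor
  · rintro ⟨A, B, h⟩
    refine ⟨e A, e B, ?_⟩
    have := mem_span_image_of_mem e h (subset_refl _)
    simpa [map_sub, map_add, map_mul] using this
  · rintro ⟨A, B, h⟩
    refine ⟨e.symm A, e.symm B, ?_⟩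
    have himg : ⇑e.symm '' (⇑e '' T) ⊆ T := by
      rw [← Set.image_comp]
      simp [Function.comp_def]
    have := mem_span_image_of_mem e.symm h himg
    simpa [map_sub, map_add, map_mul] using this

lemma ideal_map_symm_map {R S : Type*} [CommRing R] [CommRing S] (e : R ≃+* S) (K : Ideal R) :
    Ideal.map (e.symm : S →+* R) (Ideal.map (e : R →+* S) K) = K := by
  rw [Ideal.map_map]
  have : (e.symm : S →+* R).comp (e : R →+* S) = RingHom.id R := by
    ext x; simp
  rw [this, Ideal.map_id]

/-! ### Reversed triangular sets -/

variable {k : Type*} [Field k]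

/-- Reversed variant of `IsTriangularSet`: `t i` only involves variables `≥ i`. -/
def RevTri {n : ℕ} (t : Fin n → MvPolynomial (Fin n) k) : Prop :=
  ∀ i, MonicInVar (t i) i ∧ (∀ j, j < i → degreeOf j (t i) = 0) ∧
    ∀ j, i < j → degreeOf j (t i) < degreeOf j (t j)

lemma rev_step {n : ℕ} {u : Fin (n+1) → MvPolynomial (Fin (n+1)) k} (hu : RevTri u) :
    ∃ s : Fin n → MvPolynomial (Fin n) k, RevTri s ∧ ∀ i, u i.succ = rename Fin.succ (s i) := by
  have hexists : ∀ i : Fin n, ∃ q, u i.succ = rename Fin.succ q := fun i =>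
    exists_rename_of_degreeOf_zero ((hu i.succ).2.1 0 (Fin.succ_pos i))
  choose s hs using hexists
  have hdeg : ∀ (i : Fin n) (j : Fin n),
      degreeOf j (s i) = degreeOf j.succ (u i.succ) := by
    intro i j
    rw [hs i, degreeOf_rename_of_injective (Fin.succ_injective n)]
  refine ⟨s, ?_, hs⟩
  intro i
  refine ⟨?_, ?_, ?_⟩
  · obtain ⟨d, r, hd, hr, hface⟩ := (hu i.succ).1
    set ρ := s i - X i ^ d with hρ
    have hrρ : rename Fin.succ ρ = r := by
      have : rename Fin.succ (s i) = X i.succ ^ d + rename Fin.succ ρ := by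
        rw [hρ, map_sub, map_pow, rename_X]; ring
      rw [← hs i, hface] at this
      exact (add_left_cancel this).symm
    refine ⟨d, ρ, hd, ?_, by rw [hρ]; ring⟩
    have : degreeOf i ρ = degreeOf i.succ r := by
      rw [← hrρ, degreeOf_rename_of_injective (Fin.succ_injective n)]
    rw [this]; exact hr
  · intro j hj
    rw [hdeg]
    exact (hu i.succ).2.1 j.succ (Fin.succ_lt_succ_iff.mpr hj)
  · intro j hj
    rw [hdeg, hdeg]
    exact (hu i.succ).2.2 j.succ (Fin.succ_lt_succ_iff.mpr hj)

lemma F_monic {n : ℕ} {p : MvPolynomial (Fin (n+1)) k} (h : MonicInVar p 0) :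
    (finSuccEquiv k n p).Monic ∧ 0 < (finSuccEquiv k n p).natDegree := by
  obtain ⟨d, r, hd, hr, hface⟩ := h
  have hF : finSuccEquiv k n p = Polynomial.X ^ d + finSuccEquiv k n r := by
    rw [hface, map_add, map_pow, finSuccEquiv_X_zero]
  have hdeg : (finSuccEquiv k n r).degree < (d : ℕ) := by
    rcases eq_or_ne (finSuccEquiv k n r) 0 with h0 | h0
    · rw [h0, degree_zero]
      exact WithBot.bot_lt_coe d
    · rw [← Polynomial.natDegree_lt_iff_degree_lt h0, natDegree_finSuccEquiv]
      exact hr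
  have hmon : Monic (Polynomial.X ^ d + finSuccEquiv k n r) := monic_X_pow_add hdeg
  have hnd : (Polynomial.X ^ d + finSuccEquiv k n r).natDegree = d := by
    have hdd : (Polynomial.X ^ d + finSuccEquiv k n r).degree = ((d : ℕ) : WithBot ℕ) := by
      rw [Polynomial.degree_add_eq_left_of_degree_lt (by rwa [degree_X_pow]), degree_X_pow]
    exact Polynomial.natDegree_eq_of_degree_eq_some hdd
  refine ⟨by rw [hF]; exact hmon, by rw [hF, hnd]; exact hd⟩

lemma range_u_eq {n : ℕ} (u : Fin (n+1) → MvPolynomial (Fin (n+1)) k) :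
    Set.range u = {u 0} ∪ Set.range (fun i : Fin n => u i.succ) := by
  ext x
  constructor
  · rintro ⟨j, rfl⟩
    rcases Fin.eq_zero_or_eq_succ j with rfl | ⟨i, rfl⟩
    · exact Or.inl rfl
    · exact Or.inr ⟨i, rfl⟩
  · rintro (h | ⟨i, rfl⟩)
    · exact ⟨0, h.symm⟩
    · exact ⟨i.succ, rfl⟩

instance quotPolyTwoSided {σ K : Type*} [Field K] (I : Ideal (MvPolynomial σ K))
    (F : (MvPolynomial σ K ⧸ I)[X]) : (Ideal.span {F}).IsTwoSided :=
  @Ideal.instIsTwoSided_1 ((MvPolynomial σ K ⧸ I)[X]) Polynomial.commRing (Ideal.span {F})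

lemma quot_iso {n : ℕ} (u : Fin (n+1) → MvPolynomial (Fin (n+1)) k)
    (s : Fin n → MvPolynomial (Fin n) k) (hus : ∀ i, u i.succ = rename Fin.succ (s i)) :
    Nonempty ((MvPolynomial (Fin (n+1)) k ⧸ Ideal.span (Set.range u)) ≃ₐ[k]
      ((MvPolynomial (Fin n) k ⧸ Ideal.span (Set.range s))[X] ⧸
        Ideal.span {Polynomial.map (Ideal.Quotient.mk (Ideal.span (Set.range s)))
          (finSuccEquiv k n (u 0))})) := by
  classical
  set I : Ideal (MvPolynomial (Fin n) k) := Ideal.span (Set.range s) with hI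
  set F : (MvPolynomial (Fin n) k)[X] := finSuccEquiv k n (u 0) with hF
  set Fb : (MvPolynomial (Fin n) k ⧸ I)[X] := F.map (Ideal.Quotient.mk I) with hFb
  set ψ : (MvPolynomial (Fin n) k)[X] →ₐ[k] ((MvPolynomial (Fin n) k ⧸ I)[X] ⧸ Ideal.span {Fb}) :=
    (Ideal.Quotient.mkₐ k (Ideal.span {Fb})).comp (Polynomial.mapAlgHom (Ideal.Quotient.mkₐ k I))
    with hψ
  have hψap : ∀ w : (MvPolynomial (Fin n) k)[X], ψ w = Ideal.Quotient.mk (Ideal.span {Fb})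
      (w.map (Ideal.Quotient.mk I)) := fun w => rfl
  have hψs : Function.Surjective ψ := by
    intro z
    obtain ⟨w, rfl⟩ := Ideal.Quotient.mk_surjective z
    obtain ⟨w', rfl⟩ := Polynomial.map_surjective _ Ideal.Quotient.mk_surjective w
    exact ⟨w', rfl⟩
  have hcmem : ∀ i : Fin n, Polynomial.C (s i) ∈ RingHom.ker ψ := by
    intro i
    rw [RingHom.mem_ker, hψap, Polynomial.map_C, Ideal.Quotient.eq_zero_iff_mem.mpr
      (Ideal.subset_span (Set.mem_range_self i)), Polynomial.C_0, map_zero]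
  have hker : RingHom.ker ψ = Ideal.span ({F} ∪ ⇑Polynomial.C '' Set.range s) := by
    apply le_antisymm
    · intro x hx
      rw [RingHom.mem_ker, hψap, Ideal.Quotient.eq_zero_iff_mem] at hx
      obtain ⟨gb, hgb⟩ := (Ideal.mem_span_singleton (α := (MvPolynomial (Fin n) k ⧸ I)[X])).mp hx
      obtain ⟨G, hG⟩ := Polynomial.map_surjective _ Ideal.Quotient.mk_surjective gb
      have h2 : x - F * G ∈ RingHom.ker (Polynomial.mapRingHom (Ideal.Quotient.mk I)) := by
        rw [RingHom.mem_ker, map_sub, map_mul]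
        simp only [Polynomial.coe_mapRingHom, hG]
        rw [← hFb, hgb, sub_self]
      rw [Polynomial.ker_mapRingHom, Ideal.mk_ker] at h2
      have h3 : I.map Polynomial.C ≤ Ideal.span ({F} ∪ ⇑Polynomial.C '' Set.range s) := by
        rw [hI, Ideal.map_span]
        exact Ideal.span_mono Set.subset_union_right
      have h4 : F * G ∈ Ideal.span ({F} ∪ ⇑Polynomial.C '' Set.range s) :=
        Ideal.mul_mem_right _ _ (Ideal.subset_span (Or.inl rfl))
      have h5 := Ideal.add_mem _ (h3 h2) h4
      simpa using h5
    · rw [Ideal.span_le]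
      rintro y (rfl | ⟨a, ⟨i, rfl⟩, rfl⟩)
      · rw [SetLike.mem_coe, RingHom.mem_ker, hψap]
        exact Ideal.Quotient.eq_zero_iff_mem.mpr (Ideal.subset_span rfl)
      · exact hcmem i
  have hmap : Ideal.map ((finSuccEquiv k n : MvPolynomial (Fin (n+1)) k ≃+*
      (MvPolynomial (Fin n) k)[X]) :
      MvPolynomial (Fin (n+1)) k →+* (MvPolynomial (Fin n) k)[X])
      (Ideal.span (Set.range u)) = RingHom.ker ψ := by
    rw [Ideal.map_span, hker]
    congr 1
    rw [range_u_eq u, Set.image_union, Set.image_singleton]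
    congr 1
    ext x
    constructor
    · rintro ⟨y, ⟨i, rfl⟩, rfl⟩
      refine ⟨s i, ⟨i, rfl⟩, ?_⟩
      simp only [hus i]
      exact (fse_rename_succ (s i)).symm
    · rintro ⟨y, ⟨i, rfl⟩, rfl⟩
      refine ⟨u i.succ, ⟨i, rfl⟩, ?_⟩
      simp only [hus i]
      exact fse_rename_succ (s i)
  exact ⟨(Ideal.quotientEquivAlg (Ideal.span (Set.range u)) (RingHom.ker ψ)
    (finSuccEquiv k n) hmap.symm).trans (Ideal.quotientKerAlgEquivOfSurjective hψs)⟩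

lemma const_inj {B : Type*} [CommRing B] {f : B[X]} (hf : f.Monic) (hd : 0 < f.natDegree)
    {a : B} (ha : (Polynomial.C a : B[X]) ∈ Ideal.span {f}) : a = 0 := by
  by_contra ha0
  obtain ⟨c, hc⟩ := Ideal.mem_span_singleton.mp ha
  have hc0 : c ≠ 0 := by rintro rfl; rw [mul_zero] at hc; exact ha0 (by simpa using hc)
  have hdeg : (f * c).natDegree = f.natDegree + c.natDegree :=
    Polynomial.natDegree_mul' (by
      rw [hf.leadingCoeff, one_mul]; exact leadingCoeff_ne_zero.mpr hc0)
  rw [← hc, natDegree_C] at hdeg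
  omega

lemma quot_nontrivial {B : Type*} [CommRing B] [Nontrivial B] {f : B[X]} (hf : f.Monic)
    (hd : 0 < f.natDegree) : Nontrivial (B[X] ⧸ Ideal.span {f}) := by
  refine ⟨Ideal.Quotient.mk _ (Polynomial.C 1), 0, ?_⟩
  intro h
  rw [Ideal.Quotient.eq_zero_iff_mem] at h
  exact one_ne_zero (const_inj hf hd h)

lemma revFinite : ∀ (n : ℕ) (t : Fin n → MvPolynomial (Fin n) k), RevTri t →
    Module.Finite k (MvPolynomial (Fin n) k ⧸ Ideal.span (Set.range t)) ∧
      Nontrivial (MvPolynomial (Fin n) k ⧸ Ideal.span (Set.range t)) := by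
  intro n
  induction n with
  | zero =>
      intro t _
      haveI : Module.Finite k (MvPolynomial (Fin 0) k) :=
        Module.Finite.equiv (isEmptyAlgEquiv k (Fin 0)).symm.toLinearEquiv
      constructor
      · exact Module.Finite.of_surjective (Ideal.Quotient.mkₐ k _).toLinearMap
          Ideal.Quotient.mk_surjective
      · rw [Set.range_eq_empty t, Ideal.span_empty]
        exact Function.Injective.nontrivial (RingEquiv.quotientBot _).symm.injective

  | succ n IH =>
      intro u hu
      obtain ⟨s, hs, hus⟩ := rev_step hu
      obtain ⟨E⟩ := quot_iso u s hus
      obtain ⟨hfin, hnt⟩ := IH s hs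
      haveI hAI : Module.Finite k (MvPolynomial (Fin n) k ⧸ Ideal.span (Set.range s)) := hfin
      haveI := hnt
      obtain ⟨hFM, hFd⟩ := F_monic (k := k) (hu 0).1
      have hFbM : (Polynomial.map (Ideal.Quotient.mk (Ideal.span (Set.range s)))
          (finSuccEquiv k n (u 0))).Monic := hFM.map _
      haveI : Module.Finite (MvPolynomial (Fin n) k ⧸ Ideal.span (Set.range s))
          ((MvPolynomial (Fin n) k ⧸ Ideal.span (Set.range s))[X] ⧸
            Ideal.span {Polynomial.map (Ideal.Quotient.mk (Ideal.span (Set.range s)))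
              (finSuccEquiv k n (u 0))}) :=
        Module.Finite.of_basis (AdjoinRoot.powerBasis' hFbM).basis
      haveI : Module.Finite k
          ((MvPolynomial (Fin n) k ⧸ Ideal.span (Set.range s))[X] ⧸
            Ideal.span {Polynomial.map (Ideal.Quotient.mk (Ideal.span (Set.range s)))
              (finSuccEquiv k n (u 0))}) :=
        Module.Finite.trans (MvPolynomial (Fin n) k ⧸ Ideal.span (Set.range s)) _
      have hFbd : 0 < ((finSuccEquiv k n (u 0)).map
          (Ideal.Quotient.mk (Ideal.span (Set.range s)))).natDegree := by
        rw [hFM.natDegree_map]; exact hFd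
      constructor
      · exact Module.Finite.equiv E.symm.toLinearEquiv
      · have := quot_nontrivial hFbM hFbd
        exact Function.Injective.nontrivial E.symm.injective

lemma isRadical_span_image_of {R S : Type*} [CommRing R] [CommRing S] (e : R ≃+* S)
    (T : Set R) (h : (Ideal.span T).IsRadical) : (Ideal.span (⇑e '' T)).IsRadical := by
  intro x hx
  obtain ⟨m, hm⟩ := Ideal.mem_radical_iff.mp hx
  have h1 : e.symm x ^ m ∈ Ideal.span (⇑e.symm '' (⇑e '' T)) := by
    have := mem_span_image_of_mem e.symm hm (subset_refl _)
    rwa [map_pow] at this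
  have himg : ⇑e.symm '' (⇑e '' T) ⊆ T := by
    rw [← Set.image_comp]; simp [Function.comp_def]
  have h2 : e.symm x ∈ Ideal.span T :=
    h (Ideal.mem_radical_iff.mpr ⟨m, Ideal.span_mono himg h1⟩)
  have h3 := mem_span_image_of_mem e h2 (subset_refl _)
  rwa [RingEquiv.apply_symm_apply] at h3

lemma isRadical_span_image_iff {R S : Type*} [CommRing R] [CommRing S] (e : R ≃+* S)
    (T : Set R) :
    (Ideal.span (⇑e '' T)).IsRadical ↔ (Ideal.span T).IsRadical := by
  constructor
  · intro h
    have h2 := isRadical_span_image_of e.symm (⇑e '' T) h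
    have himg : ⇑e.symm '' (⇑e '' T) = T := by
      rw [← Set.image_comp]; simp [Function.comp_def]
    rwa [himg] at h2
  · exact isRadical_span_image_of e T

lemma revMain [PerfectField k] : ∀ (n : ℕ) (t : Fin n → MvPolynomial (Fin n) k), RevTri t →
    ((Ideal.span (Set.range t)).IsRadical ↔
      ∀ i, ∃ A B, A * t i + B * pderiv i (t i) - 1 ∈
        Ideal.span {f | ∃ j, i < j ∧ f = t j}) := by
  intro n
  induction n with
  | zero =>
      intro t _
      constructor
      · intro _ i; exact i.elim0
      · intro _
        rw [Set.range_eq_empty t, Ideal.span_empty]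
        exact Ideal.isRadical_bot_of_noZeroDivisors
  | succ n IH =>
      intro u hu
      obtain ⟨s, hs, hus⟩ := rev_step hu
      obtain ⟨E⟩ := quot_iso u s hus
      obtain ⟨hfin, hnt⟩ := revFinite n s hs
      haveI := hfin
      haveI := hnt
      obtain ⟨hFM, hFd⟩ := F_monic (k := k) (hu 0).1
      have hFbM : ((finSuccEquiv k n (u 0)).map
          (Ideal.Quotient.mk (Ideal.span (Set.range s)))).Monic := hFM.map _
      have hFbd : 0 < ((finSuccEquiv k n (u 0)).map
          (Ideal.Quotient.mk (Ideal.span (Set.range s)))).natDegree := by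
        rw [hFM.natDegree_map]; exact hFd
      set χ : MvPolynomial (Fin (n+1)) k →+* (MvPolynomial (Fin n) k ⧸
          Ideal.span (Set.range s))[X] :=
        (Polynomial.mapRingHom (Ideal.Quotient.mk (Ideal.span (Set.range s)))).comp
          ((finSuccEquiv k n : MvPolynomial (Fin (n+1)) k ≃+* (MvPolynomial (Fin n) k)[X]) :
            MvPolynomial (Fin (n+1)) k →+* (MvPolynomial (Fin n) k)[X]) with hχ
      have hχap : ∀ w, χ w = (finSuccEquiv k n w).map
          (Ideal.Quotient.mk (Ideal.span (Set.range s))) := fun w => rfl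
      have hχu0 : χ (u 0) = (finSuccEquiv k n (u 0)).map
          (Ideal.Quotient.mk (Ideal.span (Set.range s))) := rfl
      have hχpd : χ (pderiv 0 (u 0)) = Polynomial.derivative ((finSuccEquiv k n (u 0)).map
          (Ideal.Quotient.mk (Ideal.span (Set.range s)))) := by
        rw [hχap, ← fse_pderiv, Polynomial.derivative_map]
      have hχsucc : ∀ i : Fin n, χ (u i.succ) = 0 := by
        intro i
        rw [hχap, hus i, fse_rename_succ, Polynomial.map_C,
          Ideal.Quotient.eq_zero_iff_mem.mpr (Ideal.subset_span (Set.mem_range_self i)),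
          Polynomial.C_0]
      have hχsurj : Function.Surjective χ := by
        intro z
        obtain ⟨w, hw⟩ := Polynomial.map_surjective _ Ideal.Quotient.mk_surjective z
        exact ⟨(finSuccEquiv k n).symm w, by rw [hχap, AlgEquiv.apply_symm_apply, hw]⟩
      have hc0 : IsCoprime ((finSuccEquiv k n (u 0)).map
            (Ideal.Quotient.mk (Ideal.span (Set.range s))))
            (Polynomial.derivative ((finSuccEquiv k n (u 0)).map
              (Ideal.Quotient.mk (Ideal.span (Set.range s))))) ↔
          (∃ A B, A * u 0 + B * pderiv 0 (u 0) - 1 ∈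
            Ideal.span {f | ∃ j, (0 : Fin (n+1)) < j ∧ f = u j}) := by
        constructor
        · rintro ⟨a, b, hab⟩
          obtain ⟨A0, hA0⟩ := hχsurj a
          obtain ⟨B0, hB0⟩ := hχsurj b
          refine ⟨A0, B0, ?_⟩
          have hkm : A0 * u 0 + B0 * pderiv 0 (u 0) - 1 ∈ RingHom.ker χ := by
            rw [RingHom.mem_ker, map_sub, map_add, map_mul, map_mul, map_one,
              hA0, hB0, hχu0, hχpd, hab, sub_self]
          have hkerle : RingHom.ker χ ≤
              Ideal.span {f | ∃ j, (0 : Fin (n+1)) < j ∧ f = u j} := by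
            intro x hx
            rw [RingHom.mem_ker, hχap] at hx
            have h1 : finSuccEquiv k n x ∈ RingHom.ker
                (Polynomial.mapRingHom (Ideal.Quotient.mk (Ideal.span (Set.range s)))) := hx
            rw [Polynomial.ker_mapRingHom, Ideal.mk_ker, Ideal.map_span] at h1
            have himgeq : ⇑(Polynomial.C : MvPolynomial (Fin n) k →+*
                (MvPolynomial (Fin n) k)[X]) '' Set.range s =
                ⇑(finSuccEquiv k n) '' Set.range (fun i : Fin n => u i.succ) := by
              ext y
              constructor
              · rintro ⟨z, ⟨i, rfl⟩, rfl⟩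
                refine ⟨u i.succ, ⟨i, rfl⟩, ?_⟩
                show (finSuccEquiv k n) (u i.succ) = _
                rw [hus i]; exact fse_rename_succ (s i)
              · rintro ⟨z, ⟨i, rfl⟩, rfl⟩
                refine ⟨s i, ⟨i, rfl⟩, ?_⟩
                show Polynomial.C (s i) = (finSuccEquiv k n) (u i.succ)
                rw [hus i]; exact (fse_rename_succ (s i)).symm
            rw [himgeq] at h1
            have hsym : ⇑(finSuccEquiv k n).symm ''
                (⇑(finSuccEquiv k n) '' Set.range (fun i : Fin n => u i.succ)) ⊆
                Set.range (fun i : Fin n => u i.succ) := by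
              rw [← Set.image_comp]; simp [Function.comp_def]
            have h4 := mem_span_image_of_mem (finSuccEquiv k n).symm h1 hsym
            rw [AlgEquiv.symm_apply_apply] at h4
            refine Ideal.span_mono ?_ h4
            rintro _ ⟨i, rfl⟩
            exact ⟨i.succ, i.succ_pos, rfl⟩
          exact hkerle hkm
        · rintro ⟨A0, B0, hmem⟩
          have h1 := mem_span_image_of_mem χ hmem (subset_refl _)
          have h2 : Ideal.span (⇑χ '' {f | ∃ j, (0 : Fin (n+1)) < j ∧ f = u j}) ≤ ⊥ := by
            rw [Ideal.span_le]
            rintro _ ⟨f', ⟨j, hj, rfl⟩, rfl⟩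
            obtain ⟨i, rfl⟩ := Fin.eq_succ_of_ne_zero (Fin.pos_iff_ne_zero.mp hj)
            simp [hχsucc i]
          have h3 := h2 h1
          rw [Ideal.mem_bot, map_sub, map_add, map_mul, map_mul, map_one, hχu0, hχpd] at h3
          exact ⟨χ A0, χ B0, by rw [← sub_eq_zero]; exact h3⟩
      have hcsucc : ∀ i : Fin n,
          ((∃ a b, a * s i + b * pderiv i (s i) - 1 ∈
              Ideal.span {f | ∃ j, i < j ∧ f = s j}) ↔
           (∃ A B, A * u i.succ + B * pderiv i.succ (u i.succ) - 1 ∈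
              Ideal.span {f | ∃ j, i.succ < j ∧ f = u j})) := by
        intro i
        have hpd : pderiv i.succ (u i.succ) = rename Fin.succ (pderiv i (s i)) := by
          rw [hus i, pderiv_rename (Fin.succ_injective n)]
        constructor
        · rintro ⟨a, b, h⟩
          refine ⟨rename Fin.succ a, rename Fin.succ b, ?_⟩
          have himg : ⇑(rename (σ := Fin n) (R := k) Fin.succ) ''
              {f | ∃ j, i < j ∧ f = s j} ⊆ {f | ∃ j, i.succ < j ∧ f = u j} := by
            rintro _ ⟨f', ⟨j, hij, rfl⟩, rfl⟩
            exact ⟨j.succ, Fin.succ_lt_succ_iff.mpr hij, (hus j).symm⟩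
          have h5 := mem_span_image_of_mem (rename (σ := Fin n) (R := k) Fin.succ) h himg
          have heq : (rename (σ := Fin n) (R := k) Fin.succ)
              (a * s i + b * pderiv i (s i) - 1) =
              rename Fin.succ a * u i.succ +
                rename Fin.succ b * pderiv i.succ (u i.succ) - 1 := by
            rw [hpd, hus i, map_sub, map_add, map_mul, map_mul, map_one]
          rwa [heq] at h5
        · rintro ⟨A, B, h⟩
          set π : MvPolynomial (Fin (n+1)) k →ₐ[k] MvPolynomial (Fin n) k :=
            aeval (Fin.cases 0 MvPolynomial.X) with hπ
          have hπren : ∀ q : MvPolynomial (Fin n) k, π (rename Fin.succ q) = q := by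
            intro q
            rw [hπ, aeval_rename]
            have hcomp : ((Fin.cases 0 MvPolynomial.X : Fin (n+1) → MvPolynomial (Fin n) k) ∘ Fin.succ) =
                MvPolynomial.X := funext fun j => by simp
            rw [hcomp]
            exact aeval_X_left_apply q
          refine ⟨π A, π B, ?_⟩
          have himg : ⇑π '' {f | ∃ j, i.succ < j ∧ f = u j} ⊆
              {f | ∃ j, i < j ∧ f = s j} := by
            rintro _ ⟨f', ⟨j, hij, rfl⟩, rfl⟩
            have hj0 : j ≠ 0 := by rintro rfl; exact absurd hij (by simp)
            obtain ⟨j0, rfl⟩ := Fin.eq_succ_of_ne_zero hj0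
            refine ⟨j0, Fin.succ_lt_succ_iff.mp hij, ?_⟩
            rw [hus j0, hπren]
          have h5 := mem_span_image_of_mem π h himg
          have hπu : π (u i.succ) = s i := by rw [hus i, hπren]
          have hπpd : π (pderiv i.succ (u i.succ)) = pderiv i (s i) := by
            rw [hpd, hπren]
          have heq : π (A * u i.succ + B * pderiv i.succ (u i.succ) - 1) =
              π A * s i + π B * pderiv i (s i) - 1 := by
            rw [map_sub, map_add, map_mul, map_mul, map_one, hπu, hπpd]
          rwa [heq] at h5
      refine Iff.trans (Ideal.isRadical_iff_quotient_reduced _)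
        (Iff.trans (isReduced_congr E.toRingEquiv) (Iff.trans (keyStep (k := k) hFbM hFbd) ?_))
      rw [Fin.forall_fin_succ]
      constructor
      · rintro ⟨h1, h2⟩
        have hrad : (Ideal.span (Set.range s)).IsRadical :=
          (Ideal.isRadical_iff_quotient_reduced _).mpr h1
        exact ⟨hc0.mp h2, fun i => (hcsucc i).mp ((IH s hs).mp hrad i)⟩
      · rintro ⟨h1, h2⟩
        exact ⟨(Ideal.isRadical_iff_quotient_reduced _).mp
          ((IH s hs).mpr fun i => (hcsucc i).mpr (h2 i)), hc0.mpr h1⟩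

end TriangularRadical

/-- Over a perfect field, the ideal of a zero-dimensional triangular set `T` is radical iff for
every `i` we have `gcd(t_i, ∂t_i/∂z_i) = 1 (mod ⟨T_{i-1}⟩)`, i.e. `t_i` and its derivative
generate the unit ideal modulo `⟨t_1, …, t_{i-1}⟩`. -/
theorem radical_iff_separable_mod_lower {k : Type*} [Field k] [PerfectField k] {n : ℕ}
    (t : Fin n → MvPolynomial (Fin n) k) (ht : IsTriangularSet t) :
    (Ideal.span (Set.range t)).IsRadical ↔
      ∀ i : Fin n, ∃ A B : MvPolynomial (Fin n) k,
        A * t i + B * (pderiv i (t i)) - 1 ∈ Ideal.span {f | ∃ j : Fin n, j < i ∧ f = t j} := by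
  classical
  open TriangularRadical in
  set u : Fin n → MvPolynomial (Fin n) k := fun i => rename Fin.rev (t i.rev) with hudef
  set e : MvPolynomial (Fin n) k ≃+* MvPolynomial (Fin n) k :=
    (renameEquiv k (Fin.revPerm (n := n))).toRingEquiv with hedef
  have heap : ∀ p : MvPolynomial (Fin n) k, e p = rename Fin.rev p := fun p => rfl
  have hrevdeg : ∀ (p : MvPolynomial (Fin n) k) (j : Fin n),
      degreeOf j (rename Fin.rev p) = degreeOf j.rev p := by
    intro p j
    have h := degreeOf_rename_of_injective (p := p) (Fin.rev_injective) j.rev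
    rwa [Fin.rev_rev] at h
  have hu : TriangularRadical.RevTri u := by
    intro i
    obtain ⟨⟨d, r, hd, hr, heq⟩, h2, h3⟩ := ht i.rev
    refine ⟨⟨d, rename Fin.rev r, hd, ?_, ?_⟩, ?_, ?_⟩
    · rw [hrevdeg]; exact hr
    · show rename Fin.rev (t i.rev) = _
      rw [heq, map_add, map_pow, rename_X, Fin.rev_rev]
    · intro j hj
      show degreeOf j (rename Fin.rev (t i.rev)) = 0
      rw [hrevdeg]
      exact h2 j.rev (Fin.rev_lt_rev.mpr hj)
    · intro j hj
      show degreeOf j (rename Fin.rev (t i.rev)) < degreeOf j (rename Fin.rev (t j.rev))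
      rw [hrevdeg, hrevdeg]
      exact h3 j.rev (Fin.rev_lt_rev.mpr hj)
  have main := TriangularRadical.revMain n u hu
  have hrange : Set.range u = ⇑e '' Set.range t := by
    ext x
    simp only [Set.mem_image, Set.mem_range]
    constructor
    · rintro ⟨i, rfl⟩
      exact ⟨t i.rev, ⟨i.rev, rfl⟩, rfl⟩
    · rintro ⟨y, ⟨i0, rfl⟩, rfl⟩
      refine ⟨i0.rev, ?_⟩
      show u i0.rev = e (t i0)
      rw [hudef]
      simp only []
      rw [Fin.rev_rev]
      rfl
  have condrev : ∀ i : Fin n,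
      ((∃ A B, A * t i.rev + B * pderiv i.rev (t i.rev) - 1 ∈
          Ideal.span {f | ∃ j : Fin n, j < i.rev ∧ f = t j}) ↔
       (∃ A B, A * u i + B * pderiv i (u i) - 1 ∈
          Ideal.span {f | ∃ j, i < j ∧ f = u j})) := by
    intro i
    have hex : e (t i.rev) = u i := rfl
    have hey : e (pderiv i.rev (t i.rev)) = pderiv i (u i) := by
      have h := pderiv_rename (R := k) (Fin.rev_injective) i.rev (t i.rev)
      rw [Fin.rev_rev] at h
      exact h.symm
    have hset : ⇑e '' {f | ∃ j : Fin n, j < i.rev ∧ f = t j} =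
        {f | ∃ j, i < j ∧ f = u j} := by
      ext x
      constructor
      · rintro ⟨f', ⟨j0, hj0, rfl⟩, rfl⟩
        refine ⟨j0.rev, ?_, ?_⟩
        · have h := Fin.rev_lt_rev.mpr hj0
          rwa [Fin.rev_rev] at h
        · show e (t j0) = u j0.rev
          rw [hudef]
          simp only []
          rw [Fin.rev_rev]
          rfl
      · rintro ⟨j, hij, rfl⟩
        refine ⟨t j.rev, ⟨j.rev, ?_, rfl⟩, rfl⟩
        exact Fin.rev_lt_rev.mpr hij
    refine Iff.trans (TriangularRadical.cond_transfer e (t i.rev)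
      (pderiv i.rev (t i.rev)) _) ?_
    rw [hex, hey, hset]
  have condrev' : ∀ i0 : Fin n,
      ((∃ A B, A * t i0 + B * pderiv i0 (t i0) - 1 ∈
          Ideal.span {f | ∃ j : Fin n, j < i0 ∧ f = t j}) ↔
       (∃ A B, A * u i0.rev + B * pderiv i0.rev (u i0.rev) - 1 ∈
          Ideal.span {f | ∃ j, i0.rev < j ∧ f = u j})) := by
    intro i0
    have h := condrev i0.rev
    rwa [Fin.rev_rev] at h
  refine Iff.trans ?_ (Iff.trans main ?_)
  · rw [hrange]
    exact (TriangularRadical.isRadical_span_image_iff e (Set.range t)).symm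
  · exact ⟨fun h i0 => (condrev' i0).mpr (h i0.rev), fun h i => (condrev i).mp (h i.rev)⟩
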